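/- Fix an integer n ≥ 1 and a bit vector X ∈ {0,1}^n, and an index J ∈ [n]. Define for i ∈ [n] the interval I_i = [i/(2n+1), 1 + i/(2n+1)] if X[i] = 1, and define the special interval I* = [1 + J/(2n+1) + 1/(2n+1)^2, 2 + J/(2n+1) + 1/(2n+1)^2]. Then among the intervals {I_i : J ≤ i ≤ n, X[i]=1} ∪ {I*}, the maximum pairwise disjoint subset has size 2 if X[J] = 1 and size 1 otherwise (assuming the set is nonempty). -/
import Mathlib


theorem stmt_6 (n : ℕ) (hn : 1 ≤ n) (X : ℕ → Bool) (J : ℕ)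
    (hJ : J ∈ Finset.Icc 1 n) :
    let I : ℕ → Set ℝ := fun i =>
      Set.Icc ((i : ℝ) / (2 * n + 1)) (1 + (i : ℝ) / (2 * n + 1))
    let Istar : Set ℝ :=
      Set.Icc (1 + (J : ℝ) / (2 * n + 1) + 1 / (2 * n + 1) ^ 2)
        (2 + (J : ℝ) / (2 * n + 1) + 1 / (2 * n + 1) ^ 2)
    let F : Set (Set ℝ) :=
      {s | ∃ i, J ≤ i ∧ i ≤ n ∧ X i = true ∧ s = I i} ∪ {Istar}
    (X J = true →
      (∃ T : Finset (Set ℝ), ↑T ⊆ F ∧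
        (T : Set (Set ℝ)).Pairwise Disjoint ∧ T.card = 2) ∧
      (∀ T : Finset (Set ℝ), ↑T ⊆ F →
        (T : Set (Set ℝ)).Pairwise Disjoint → T.card ≤ 2)) ∧
    (X J = false →
      (∃ T : Finset (Set ℝ), ↑T ⊆ F ∧
        (T : Set (Set ℝ)).Pairwise Disjoint ∧ T.card = 1) ∧
      (∀ T : Finset (Set ℝ), ↑T ⊆ F →
        (T : Set (Set ℝ)).Pairwise Disjoint → T.card ≤ 1)) := by
  intro I Istar F
  classical
  obtain ⟨hJ1, hJn⟩ := Finset.mem_Icc.mp hJ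
  have hn' : (1:ℝ) ≤ n := by exact_mod_cast hn
  have hc : (0:ℝ) < 2 * n + 1 := by linarith
  have hone : ∀ i : ℕ, i ≤ n → (1:ℝ) ∈ I i := by
    intro i hi
    have hi' : (i:ℝ) ≤ n := by exact_mod_cast hi
    have h0 : (0:ℝ) ≤ (i:ℝ) / (2*n+1) := by positivity
    refine ⟨?_, by linarith⟩
    rw [div_le_one hc]; linarith
  -- two I-intervals always intersect (at 1)
  have hII : ∀ i j : ℕ, i ≤ n → j ≤ n → ¬ Disjoint (I i) (I j) := by
    intro i j hi hj hd
    exact Set.disjoint_left.mp hd (hone i hi) (hone j hj)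
  -- I i intersects Istar when J < i ≤ n
  have hIstar : ∀ i : ℕ, J < i → i ≤ n → ¬ Disjoint (I i) Istar := by
    intro i hJi hin hd
    have hi' : (i:ℝ) ≤ n := by exact_mod_cast hin
    have hJi' : (J:ℝ) + 1 ≤ i := by exact_mod_cast hJi
    have h0 : (0:ℝ) ≤ (i:ℝ) / (2*n+1) := by positivity
    have h1 : ((J:ℝ) + 1) / (2*n+1) ≤ (i:ℝ) / (2*n+1) := by gcongr
    have h2 : (1:ℝ) / (2*n+1)^2 ≤ 1 / (2*n+1) := by
      apply one_div_le_one_div_of_le hc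
      nlinarith
    have h3 : (i:ℝ) / (2*n+1) ≤ 1 := by rw [div_le_one hc]; linarith
    have h4 : (0:ℝ) ≤ (J:ℝ) / (2*n+1) := by positivity
    have h5 : (0:ℝ) ≤ (1:ℝ) / (2*n+1)^2 := by positivity
    have hadd : ((J:ℝ)) / (2*n+1) + 1/(2*n+1) = ((J:ℝ)+1)/(2*n+1) := by ring
    exact Set.disjoint_left.mp hd
      (show 1 + (i:ℝ)/(2*(n:ℝ)+1) ∈ I i from ⟨by linarith, le_refl _⟩)
      ⟨by linarith, by linarith⟩
  have hdisj : Disjoint (I J) Istar := by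
    rw [Set.disjoint_left]
    intro x hx hx'
    have h5 : (0:ℝ) < (1:ℝ) / (2*n+1)^2 := by positivity
    have h1 : x ≤ 1 + (J:ℝ)/(2*n+1) := hx.2
    have h2 : 1 + (J:ℝ)/(2*n+1) + 1/(2*n+1)^2 ≤ x := hx'.1
    linarith
  have hne : I J ≠ Istar := by
    intro h
    exact Set.disjoint_left.mp hdisj (hone J hJn) (h ▸ hone J hJn)
  -- generic upper bound: card ≤ 2
  have hub2 : ∀ T : Finset (Set ℝ), ↑T ⊆ F →
      (T : Set (Set ℝ)).Pairwise Disjoint → T.card ≤ 2 := by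
    intro T hTF hTd
    by_contra h
    push_neg at h
    have hcard : 1 < (T.erase Istar).card := by
      have := T.pred_card_le_card_erase (a := Istar)
      omega
    obtain ⟨s, hs, t, ht, hst⟩ := Finset.one_lt_card.mp hcard
    have hsF := hTF (Finset.mem_coe.mpr (Finset.mem_of_mem_erase hs))
    have htF := hTF (Finset.mem_coe.mpr (Finset.mem_of_mem_erase ht))
    have hsne := Finset.ne_of_mem_erase hs
    have htne := Finset.ne_of_mem_erase ht
    have hd := hTd (Finset.mem_coe.mpr (Finset.mem_of_mem_erase hs))
      (Finset.mem_coe.mpr (Finset.mem_of_mem_erase ht)) hst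
    rcases hsF with ⟨i, _, hi2, _, rfl⟩ | hsF
    · rcases htF with ⟨j, _, hj2, _, rfl⟩ | htF
      · exact hII i j hi2 hj2 hd
      · exact htne htF
    · exact hsne hsF
  refine ⟨fun hXJ => ⟨⟨{I J, Istar}, ?_, ?_, ?_⟩, hub2⟩,
          fun hXJ => ⟨⟨{Istar}, ?_, ?_, ?_⟩, ?_⟩⟩
  · -- subset
    intro x hx
    simp only [Finset.coe_insert, Finset.coe_singleton, Set.mem_insert_iff,
      Set.mem_singleton_iff] at hx
    rcases hx with rfl | rfl
    · exact Or.inl ⟨J, le_refl J, hJn, hXJ, rfl⟩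
    · exact Or.inr rfl
  · -- pairwise disjoint
    intro x hx y hy hxy
    simp only [Finset.coe_insert, Finset.coe_singleton, Set.mem_insert_iff,
      Set.mem_singleton_iff] at hx hy
    rcases hx with rfl | rfl <;> rcases hy with rfl | rfl
    · exact absurd rfl hxy
    · exact hdisj
    · exact hdisj.symm
    · exact absurd rfl hxy
  · exact Finset.card_pair hne
  · intro x hx
    simp only [Finset.coe_singleton, Set.mem_singleton_iff] at hx
    exact Or.inr hx
  · simp
  · simp
  · -- upper bound 1 when X J = false
    intro T hTF hTd
    by_contra h
    push_neg at h
    obtain ⟨s, hs, t, ht, hst⟩ := Finset.one_lt_card.mp h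
    have hsF := hTF (Finset.mem_coe.mpr hs)
    have htF := hTF (Finset.mem_coe.mpr ht)
    have hd := hTd (Finset.mem_coe.mpr hs) (Finset.mem_coe.mpr ht) hst
    rcases hsF with ⟨i, hi1, hi2, hi3, rfl⟩ | hsF
    · rcases htF with ⟨j, hj1, hj2, hj3, rfl⟩ | htF
      · exact hII i j hi2 hj2 hd
      · have ht' : t = Istar := htF
        have hiJ : J < i := lt_of_le_of_ne hi1 (fun h => by rw [← h] at hi3; simp [hXJ] at hi3)
        rw [ht'] at hd
        exact hIstar i hiJ hi2 hd
    · have hs' : s = Istar := hsF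
      rcases htF with ⟨j, hj1, hj2, hj3, rfl⟩ | htF
      · have hjJ : J < j := lt_of_le_of_ne hj1 (fun h => by rw [← h] at hj3; simp [hXJ] at hj3)
        rw [hs'] at hd
        exact hIstar j hjJ hj2 hd.symm
      · exact hst (hs'.trans (show t = Istar from htF).symm)
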